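/- arXiv:1507.01431 — 8 statements merged into one kernel-verified Lean document; each statement's English description precedes it below -/
import Mathlib

section
/- For every 2-homogeneous polynomial P(x,y) = a·x² + b·xy + c·y² with real coefficients, max{|a|, |b|, |c|} ≤ ‖P‖_∞, where ‖P‖_∞ = sup{|P(x,y)| : |x| ≤ 1, |y| ≤ 1}. The constant 1 is sharp (attained by P(x,y) = x²). -/
/-- Sup norm of `a·x² + b·xy + c·y²` over the unit ball of `ℓ∞²`. -/
noncomputable def supNormInf (a b c : ℝ) : ℝ :=
  sSup {z : ℝ | ∃ x y : ℝ, |x| ≤ 1 ∧ |y| ≤ 1 ∧ z = |a * x ^ 2 + b * x * y + c * y ^ 2|}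

lemma bdd (a b c : ℝ) :
    BddAbove {z : ℝ | ∃ x y : ℝ, |x| ≤ 1 ∧ |y| ≤ 1 ∧ z = |a * x ^ 2 + b * x * y + c * y ^ 2|} := by
  refine ⟨|a| + |b| + |c|, ?_⟩
  rintro z ⟨x, y, hx, hy, rfl⟩
  have hx2 : |x ^ 2| ≤ 1 := by rw [abs_pow]; exact pow_le_one₀ (abs_nonneg x) hx
  have hy2 : |y ^ 2| ≤ 1 := by rw [abs_pow]; exact pow_le_one₀ (abs_nonneg y) hy
  have hxy : |x * y| ≤ 1 := by
    rw [abs_mul]; exact mul_le_one₀ hx (abs_nonneg y) hy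
  calc |a * x ^ 2 + b * x * y + c * y ^ 2|
      ≤ |a * x ^ 2 + b * x * y| + |c * y ^ 2| := abs_add_le _ _
    _ ≤ |a * x ^ 2| + |b * x * y| + |c * y ^ 2| := by gcongr; exact abs_add_le _ _
    _ ≤ |a| + |b| + |c| := by
        have t1 : |a * x ^ 2| ≤ |a| := by
          rw [abs_mul]; exact mul_le_of_le_one_right (abs_nonneg a) hx2
        have t2 : |b * x * y| ≤ |b| := by
          rw [mul_assoc, abs_mul]; exact mul_le_of_le_one_right (abs_nonneg b) hxy
        have t3 : |c * y ^ 2| ≤ |c| := by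
          rw [abs_mul]; exact mul_le_of_le_one_right (abs_nonneg c) hy2
        linarith

lemma mem_le (a b c x y : ℝ) (hx : |x| ≤ 1) (hy : |y| ≤ 1) :
    |a * x ^ 2 + b * x * y + c * y ^ 2| ≤ supNormInf a b c :=
  le_csSup (bdd a b c) ⟨x, y, hx, hy, rfl⟩

theorem stmt1 :
    (∀ a b c : ℝ, max (max |a| |b|) |c| ≤ supNormInf a b c) ∧
    max (max |(1 : ℝ)| |(0 : ℝ)|) |(0 : ℝ)| = supNormInf 1 0 0 := by
  constructor
  · intro a b c
    have h1 : |a| ≤ supNormInf a b c := by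
      have := mem_le a b c 1 0 (by norm_num) (by norm_num)
      simpa using this
    have h2 : |c| ≤ supNormInf a b c := by
      have := mem_le a b c 0 1 (by norm_num) (by norm_num)
      simpa using this
    have h3 : |b| ≤ supNormInf a b c := by
      have hu := mem_le a b c 1 1 (by norm_num) (by norm_num)
      have hv := mem_le a b c 1 (-1) (by norm_num) (by norm_num)
      have hu' : |a + b + c| ≤ supNormInf a b c := by
        have : a * 1 ^ 2 + b * 1 * 1 + c * 1 ^ 2 = a + b + c := by ring
        rwa [this] at hu
      have hv' : |a - b + c| ≤ supNormInf a b c := by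
        have : a * 1 ^ 2 + b * 1 * (-1) + c * (-1) ^ 2 = a - b + c := by ring
        rwa [this] at hv
      have : |b| ≤ (|a + b + c| + |a - b + c|) / 2 := by
        have := abs_sub (a + b + c) (a - b + c)
        have h := abs_sub_abs_le_abs_sub (a + b + c) (a - b + c)
        calc |b| = |(a + b + c) - (a - b + c)| / 2 := by
              rw [show (a + b + c) - (a - b + c) = 2 * b by ring, abs_mul]
              norm_num
          _ ≤ (|a + b + c| + |a - b + c|) / 2 := by
              gcongr
      linarith
    simp only [max_le_iff]
    exact ⟨⟨h1, h3⟩, h2⟩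
  · have h1 : supNormInf 1 0 0 ≤ 1 := by
      apply csSup_le
      · exact ⟨1, 1, 0, by norm_num⟩
      · rintro z ⟨x, y, hx, hy, rfl⟩
        have : |1 * x ^ 2 + 0 * x * y + 0 * y ^ 2| = |x| ^ 2 := by
          rw [← abs_pow]; ring_nf
        rw [this]
        exact pow_le_one₀ (abs_nonneg x) hx
    have h2 : (1 : ℝ) ≤ supNormInf 1 0 0 := by
      have := mem_le 1 0 0 1 0 (by norm_num) (by norm_num)
      simpa using this
    simp only [abs_one, abs_zero]
    norm_num
    linarith
end

section
/- For every 2-homogeneous polynomial P(x,y) = a·x² + b·xy + c·y² with real coefficients, |a| + |b| + |c| ≤ (2 + 2√2) · ‖P‖_1, where ‖P‖_1 = sup{|P(x,y)| : |x| + |y| ≤ 1}. The constant 2 + 2√2 is optimal, attained by P(x,y) = (√2/2)(x² − y²) + (2 + √2)xy. -/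
/-- Sup norm of `a·x² + b·xy + c·y²` over the unit ball of `ℓ₁²`. -/
noncomputable def supNormOne (a b c : ℝ) : ℝ :=
  sSup {z : ℝ | ∃ x y : ℝ, |x| + |y| ≤ 1 ∧ z = |a * x ^ 2 + b * x * y + c * y ^ 2|}

lemma sn_bdd (a b c : ℝ) :
    BddAbove {z : ℝ | ∃ x y : ℝ, |x| + |y| ≤ 1 ∧ z = |a * x ^ 2 + b * x * y + c * y ^ 2|} := by
  refine ⟨|a| + |b| + |c|, ?_⟩
  rintro z ⟨x, y, hxy, rfl⟩
  have hx0 := abs_nonneg x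
  have hy0 := abs_nonneg y
  have hx : |x| ≤ 1 := by linarith
  have hy : |y| ≤ 1 := by linarith
  have h1 : |a * x ^ 2| ≤ |a| := by
    rw [abs_mul, abs_pow]
    nlinarith [abs_nonneg a, mul_nonneg (abs_nonneg a) (show (0:ℝ) ≤ 1 - |x| by linarith)]
  have h2 : |b * x * y| ≤ |b| := by
    rw [abs_mul, abs_mul]
    nlinarith [abs_nonneg b, mul_nonneg (abs_nonneg b) (show (0:ℝ) ≤ 1 - |x| by linarith),
      mul_nonneg (mul_nonneg (abs_nonneg b) hx0) (show (0:ℝ) ≤ 1 - |y| by linarith)]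
  have h3 : |c * y ^ 2| ≤ |c| := by
    rw [abs_mul, abs_pow]
    nlinarith [abs_nonneg c, mul_nonneg (abs_nonneg c) (show (0:ℝ) ≤ 1 - |y| by linarith)]
  have := abs_add_three (a * x ^ 2) (b * x * y) (c * y ^ 2)
  linarith

lemma sn_le (a b c x y : ℝ) (h : |x| + |y| ≤ 1) :
    |a * x ^ 2 + b * x * y + c * y ^ 2| ≤ supNormOne a b c :=
  le_csSup (sn_bdd a b c) ⟨x, y, h, rfl⟩

lemma sn_nonneg (a b c : ℝ) : 0 ≤ supNormOne a b c :=
  le_trans (abs_nonneg _) (sn_le a b c 0 0 (by norm_num))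

set_option maxHeartbeats 2000000 in
theorem stmt5 :
    (∀ a b c : ℝ, |a| + |b| + |c| ≤ (2 + 2 * Real.sqrt 2) * supNormOne a b c) ∧
    |(Real.sqrt 2 / 2)| + |(2 + Real.sqrt 2)| + |(-(Real.sqrt 2 / 2))| =
      (2 + 2 * Real.sqrt 2) *
        supNormOne (Real.sqrt 2 / 2) (2 + Real.sqrt 2) (-(Real.sqrt 2 / 2)) := by
  have hr : Real.sqrt 2 ^ 2 = 2 := Real.sq_sqrt (by norm_num)
  have hr0 : (0:ℝ) ≤ Real.sqrt 2 := Real.sqrt_nonneg 2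
  have hr1 : (1:ℝ) ≤ Real.sqrt 2 := by nlinarith
  have hr2 : Real.sqrt 2 ≤ 2 := by nlinarith
  set r := Real.sqrt 2 with hrdef
  constructor
  · intro a b c
    set M := supNormOne a b c with hM
    have hM0 : 0 ≤ M := sn_nonneg a b c
    have h1 := sn_le a b c (1/2) (1/2)
      (by rw [abs_of_nonneg (show (0:ℝ) ≤ 1/2 by norm_num)]; norm_num)
    have h2 := sn_le a b c (1/2) (-(1/2))
      (by rw [abs_of_nonneg (show (0:ℝ) ≤ 1/2 by norm_num),
        abs_of_nonpos (show -(1/2:ℝ) ≤ 0 by norm_num)]; norm_num)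
    have h3 := sn_le a b c (r/2) (1 - r/2)
      (by rw [abs_of_nonneg (by linarith), abs_of_nonneg (by linarith)]; linarith)
    have h4 := sn_le a b c (1 - r/2) (-(r/2))
      (by rw [abs_of_nonneg (by linarith), abs_of_nonpos (by linarith)]; linarith)
    have h5 := sn_le a b c (r/2) (-(1 - r/2))
      (by rw [abs_of_nonneg (by linarith), abs_of_nonpos (by linarith)]; linarith)
    have h6 := sn_le a b c (1 - r/2) (r/2)
      (by rw [abs_of_nonneg (by linarith), abs_of_nonneg (by linarith)]; linarith)
    rw [abs_le] at h1 h2 h3 h4 h5 h6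
    obtain ⟨h1l, h1u⟩ := h1; obtain ⟨h2l, h2u⟩ := h2
    obtain ⟨h3l, h3u⟩ := h3; obtain ⟨h4l, h4u⟩ := h4
    obtain ⟨h5l, h5u⟩ := h5; obtain ⟨h6l, h6u⟩ := h6
    have e1 : a + b - c = (1 + r) *
        ((a * (r/2) ^ 2 + b * (r/2) * (1 - r/2) + c * (1 - r/2) ^ 2) -
         (a * (1 - r/2) ^ 2 + b * (1 - r/2) * (-(r/2)) + c * (-(r/2)) ^ 2)) := by
      linear_combination (c - a + (r - 1) * b / 2) * hr
    have e2 : a - b - c = (1 + r) *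
        ((a * (r/2) ^ 2 + b * (r/2) * (-(1 - r/2)) + c * (-(1 - r/2)) ^ 2) -
         (a * (1 - r/2) ^ 2 + b * (1 - r/2) * (r/2) + c * (r/2) ^ 2)) := by
      linear_combination (c - a - (r - 1) * b / 2) * hr
    have d1 : (a * (r/2) ^ 2 + b * (r/2) * (1 - r/2) + c * (1 - r/2) ^ 2) -
         (a * (1 - r/2) ^ 2 + b * (1 - r/2) * (-(r/2)) + c * (-(r/2)) ^ 2) ≤ 2 * M := by
      linarith
    have d1' : -(2 * M) ≤ (a * (r/2) ^ 2 + b * (r/2) * (1 - r/2) + c * (1 - r/2) ^ 2) -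
         (a * (1 - r/2) ^ 2 + b * (1 - r/2) * (-(r/2)) + c * (-(r/2)) ^ 2) := by
      linarith
    have d2 : (a * (r/2) ^ 2 + b * (r/2) * (-(1 - r/2)) + c * (-(1 - r/2)) ^ 2) -
         (a * (1 - r/2) ^ 2 + b * (1 - r/2) * (r/2) + c * (r/2) ^ 2) ≤ 2 * M := by
      linarith
    have d2' : -(2 * M) ≤ (a * (r/2) ^ 2 + b * (r/2) * (-(1 - r/2)) + c * (-(1 - r/2)) ^ 2) -
         (a * (1 - r/2) ^ 2 + b * (1 - r/2) * (r/2) + c * (r/2) ^ 2) := by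
      linarith
    have hr1p : (0:ℝ) ≤ 1 + r := by linarith
    have k1 : a + b - c ≤ (2 + 2 * r) * M := by
      rw [e1]; linarith [mul_le_mul_of_nonneg_left d1 hr1p]
    have k2 : -((2 + 2 * r) * M) ≤ a + b - c := by
      rw [e1]; linarith [mul_le_mul_of_nonneg_left d1' hr1p]
    have k3 : a - b - c ≤ (2 + 2 * r) * M := by
      rw [e2]; linarith [mul_le_mul_of_nonneg_left d2 hr1p]
    have k4 : -((2 + 2 * r) * M) ≤ a - b - c := by
      rw [e2]; linarith [mul_le_mul_of_nonneg_left d2' hr1p]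
    have k5u : a + b + c ≤ 4 * M := by linarith
    have k5l : -(4 * M) ≤ a + b + c := by linarith
    have k6u : a - b + c ≤ 4 * M := by linarith
    have k6l : -(4 * M) ≤ a - b + c := by linarith
    have h4M : 4 * M ≤ (2 + 2 * r) * M := by
      nlinarith [mul_nonneg (show (0:ℝ) ≤ r - 1 by linarith) hM0]
    rcases abs_cases a with ⟨ha, _⟩ | ⟨ha, _⟩ <;>
      rcases abs_cases b with ⟨hb, _⟩ | ⟨hb, _⟩ <;>
        rcases abs_cases c with ⟨hc, _⟩ | ⟨hc, _⟩ <;>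
          rw [ha, hb, hc] <;> linarith
  · -- equality part
    have core : ∀ x y : ℝ, 0 ≤ x → 0 ≤ y → x + y ≤ 1 →
        |r/2 * x ^ 2 + (2 + r) * (x * y) + (-(r/2)) * y ^ 2| ≤ 1 := by
      intro x y hx hy hs
      rw [abs_le]
      constructor
      · nlinarith [mul_nonneg hx hy, sq_nonneg x, sq_nonneg y,
          mul_nonneg hy (show (0:ℝ) ≤ 1 - y by linarith),
          mul_nonneg (mul_nonneg hy hy) (show (0:ℝ) ≤ 2 - r by linarith)]
      · have key : (4 - 2*r) * (1 - (r/2 * x ^ 2 + (2 + r) * (x * y) + (-(r/2)) * y ^ 2)) =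
            (4 - 2*r) * (1 - (x + y)) * (1 + (x + y)) + ((2 - r) * x - r * y) ^ 2 := by
          linear_combination (-2 * y ^ 2) * hr
        nlinarith [sq_nonneg ((2 - r) * x - r * y),
          mul_nonneg (mul_nonneg (show (0:ℝ) ≤ 4 - 2*r by linarith)
            (show (0:ℝ) ≤ 1 - (x + y) by linarith)) (show (0:ℝ) ≤ 1 + (x + y) by linarith), key]
    have bound : ∀ x y : ℝ, |x| + |y| ≤ 1 →
        |r/2 * x ^ 2 + (2 + r) * x * y + (-(r/2)) * y ^ 2| ≤ 1 := by
      intro x y hxy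
      rcases le_or_gt 0 x with hx | hx <;> rcases le_or_gt 0 y with hy | hy
      · have h := core x y hx hy
          (by rw [abs_of_nonneg hx, abs_of_nonneg hy] at hxy; linarith)
        rw [show r/2 * x ^ 2 + (2 + r) * x * y + (-(r/2)) * y ^ 2
            = r/2 * x ^ 2 + (2 + r) * (x * y) + (-(r/2)) * y ^ 2 from by ring]
        exact h
      · have h := core (-y) x (by linarith) hx
          (by rw [abs_of_nonneg hx, abs_of_nonpos (le_of_lt hy)] at hxy; linarith)
        rw [show r/2 * x ^ 2 + (2 + r) * x * y + (-(r/2)) * y ^ 2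
            = -(r/2 * (-y) ^ 2 + (2 + r) * ((-y) * x) + (-(r/2)) * x ^ 2) from by ring,
          abs_neg]
        exact h
      · have h := core y (-x) hy (by linarith)
          (by rw [abs_of_nonpos (le_of_lt hx), abs_of_nonneg hy] at hxy; linarith)
        rw [show r/2 * x ^ 2 + (2 + r) * x * y + (-(r/2)) * y ^ 2
            = -(r/2 * y ^ 2 + (2 + r) * (y * (-x)) + (-(r/2)) * (-x) ^ 2) from by ring,
          abs_neg]
        exact h
      · have h := core (-x) (-y) (by linarith) (by linarith)
          (by rw [abs_of_nonpos (le_of_lt hx), abs_of_nonpos (le_of_lt hy)] at hxy; linarith)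
        rw [show r/2 * x ^ 2 + (2 + r) * x * y + (-(r/2)) * y ^ 2
            = r/2 * (-x) ^ 2 + (2 + r) * ((-x) * (-y)) + (-(r/2)) * (-y) ^ 2 from by ring]
        exact h
    have hsup : supNormOne (r/2) (2 + r) (-(r/2)) = 1 := by
      apply le_antisymm
      · apply csSup_le
        · exact ⟨|r/2 * (0:ℝ) ^ 2 + (2 + r) * 0 * 0 + (-(r/2)) * 0 ^ 2|, 0, 0, by norm_num, rfl⟩
        · rintro z ⟨x, y, hxy, rfl⟩
          exact bound x y hxy
      · apply le_csSup (sn_bdd _ _ _)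
        refine ⟨r/2, 1 - r/2, ?_, ?_⟩
        · rw [abs_of_nonneg (by linarith), abs_of_nonneg (by linarith)]; linarith
        · have h : r/2 * (r/2) ^ 2 + (2 + r) * (r/2) * (1 - r/2) + (-(r/2)) * (1 - r/2) ^ 2
              = 1 := by
            linear_combination ((2 - r) / 4) * hr
          rw [h, abs_one]
    rw [hsup, abs_of_nonneg (show (0:ℝ) ≤ r/2 by linarith),
      abs_of_nonneg (show (0:ℝ) ≤ 2 + r by linarith),
      abs_of_nonpos (show -(r/2) ≤ (0:ℝ) by linarith)]
    ring
end

section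
/- For every 2-homogeneous polynomial P(x,y) = a·x² + b·xy + c·y² with real coefficients, √(a² + b² + c²) ≤ √2 · sup{|P(x,y)| : x⁴ + y⁴ ≤ 1}, and the constant √2 is optimal. Hence the 2-homogeneous Hardy–Littlewood constant on ℓ_4² equals √2: D_{ℝ,2,4}(2) = C_{ℝ,2,4}(2) = √2. -/
/-- Sup norm of `a·x² + b·xy + c·y²` over the unit ball of `ℓ₄²`. -/
noncomputable def supNormFour (a b c : ℝ) : ℝ :=
  sSup {z : ℝ | ∃ x y : ℝ, x ^ 4 + y ^ 4 ≤ 1 ∧ z = |a * x ^ 2 + b * x * y + c * y ^ 2|}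

lemma bddS (a b c : ℝ) :
    BddAbove {z : ℝ | ∃ x y : ℝ, x ^ 4 + y ^ 4 ≤ 1 ∧ z = |a * x ^ 2 + b * x * y + c * y ^ 2|} := by
  refine ⟨|a| + |b| + |c|, ?_⟩
  rintro z ⟨x, y, hxy, rfl⟩
  have hx2 : x ^ 2 ≤ 1 := by nlinarith [sq_nonneg x, sq_nonneg y, sq_nonneg (x ^ 2), sq_nonneg (y ^ 2)]
  have hy2 : y ^ 2 ≤ 1 := by nlinarith [sq_nonneg x, sq_nonneg y, sq_nonneg (x ^ 2), sq_nonneg (y ^ 2)]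
  have hx0 : (0:ℝ) ≤ x ^ 2 := sq_nonneg x
  have hy0 : (0:ℝ) ≤ y ^ 2 := sq_nonneg y
  have hxyb : |x * y| ≤ 1 := by
    rw [abs_le]
    constructor <;> nlinarith [sq_nonneg (x + y), sq_nonneg (x - y)]
  calc |a * x ^ 2 + b * x * y + c * y ^ 2|
      ≤ |a * x ^ 2 + b * x * y| + |c * y ^ 2| := abs_add_le _ _
    _ ≤ (|a * x ^ 2| + |b * x * y|) + |c * y ^ 2| := by
        exact add_le_add_left (abs_add_le (a * x ^ 2) (b * x * y)) _
    _ ≤ |a| + |b| + |c| := by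
        have h1 : |a * x ^ 2| ≤ |a| := by
          rw [abs_mul, abs_of_nonneg hx0]
          nlinarith [abs_nonneg a]
        have h2 : |b * x * y| ≤ |b| := by
          rw [mul_assoc, abs_mul]
          nlinarith [abs_nonneg b, abs_nonneg (x * y)]
        have h3 : |c * y ^ 2| ≤ |c| := by
          rw [abs_mul, abs_of_nonneg hy0]
          nlinarith [abs_nonneg c]
        linarith

lemma point_lemma (a b c p q : ℝ) (h : p ^ 2 + q ^ 2 = 1) :
    ∃ x y : ℝ, x ^ 4 + y ^ 4 ≤ 1 ∧
      a * x ^ 2 + b * x * y + c * y ^ 2 =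
        (a - c) / 2 * p + b / Real.sqrt 2 * q + (a + c) / 2 * Real.sqrt (p ^ 2 + 2 * q ^ 2) := by
  set r := Real.sqrt (p ^ 2 + 2 * q ^ 2) with hr
  have hrnn : 0 ≤ r := Real.sqrt_nonneg _
  have hr2 : r ^ 2 = p ^ 2 + 2 * q ^ 2 := Real.sq_sqrt (by positivity)
  have hrp : |p| ≤ r := by
    rw [← Real.sqrt_sq_eq_abs]
    exact Real.sqrt_le_sqrt (by nlinarith [sq_nonneg q])
  obtain ⟨hpl, hpu⟩ := abs_le.mp hrp
  have h1 : (0:ℝ) ≤ (r + p) / 2 := by linarith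
  have h2 : (0:ℝ) ≤ (r - p) / 2 := by linarith
  set s : ℝ := if 0 ≤ q then 1 else -1 with hs
  have hs2 : s ^ 2 = 1 := by rw [hs]; split <;> norm_num
  refine ⟨Real.sqrt ((r + p) / 2), s * Real.sqrt ((r - p) / 2), ?_, ?_⟩
  · have hx2 : (Real.sqrt ((r + p) / 2)) ^ 2 = (r + p) / 2 := Real.sq_sqrt h1
    have hy2 : (s * Real.sqrt ((r - p) / 2)) ^ 2 = (r - p) / 2 := by
      rw [mul_pow, hs2, one_mul]; exact Real.sq_sqrt h2
    have hx4 : (Real.sqrt ((r + p) / 2)) ^ 4 = ((r + p) / 2) ^ 2 := by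
      rw [show (4:ℕ) = 2 * 2 by norm_num, pow_mul, hx2]
    have hy4 : (s * Real.sqrt ((r - p) / 2)) ^ 4 = ((r - p) / 2) ^ 2 := by
      rw [show (4:ℕ) = 2 * 2 by norm_num, pow_mul, hy2]
    rw [hx4, hy4]
    nlinarith
  · have hx2 : (Real.sqrt ((r + p) / 2)) ^ 2 = (r + p) / 2 := Real.sq_sqrt h1
    have hy2 : (s * Real.sqrt ((r - p) / 2)) ^ 2 = (r - p) / 2 := by
      rw [mul_pow, hs2, one_mul]; exact Real.sq_sqrt h2
    have hxy : Real.sqrt ((r + p) / 2) * (s * Real.sqrt ((r - p) / 2)) = q / Real.sqrt 2 := by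
      have hprod : Real.sqrt ((r + p) / 2) * Real.sqrt ((r - p) / 2)
          = Real.sqrt (((r + p) / 2) * ((r - p) / 2)) := (Real.sqrt_mul h1 _).symm
      have harg : ((r + p) / 2) * ((r - p) / 2) = q ^ 2 / 2 := by nlinarith
      have hq2 : Real.sqrt (q ^ 2 / 2) = |q| / Real.sqrt 2 := by
        rw [Real.sqrt_div (sq_nonneg q), Real.sqrt_sq_eq_abs]
      have hsq : s * |q| = q := by
        rw [hs]; split
        · rw [abs_of_nonneg ‹0 ≤ q›, one_mul]
        · rw [abs_of_neg (lt_of_not_ge ‹¬ 0 ≤ q›)]; ring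
      calc Real.sqrt ((r + p) / 2) * (s * Real.sqrt ((r - p) / 2))
          = s * (Real.sqrt ((r + p) / 2) * Real.sqrt ((r - p) / 2)) := by ring
        _ = s * (|q| / Real.sqrt 2) := by rw [hprod, harg, hq2]
        _ = (s * |q|) / Real.sqrt 2 := by ring
        _ = q / Real.sqrt 2 := by rw [hsq]
    have hmul : a * (Real.sqrt ((r + p) / 2)) ^ 2
        + b * Real.sqrt ((r + p) / 2) * (s * Real.sqrt ((r - p) / 2))
        + c * (s * Real.sqrt ((r - p) / 2)) ^ 2
        = a * ((r + p) / 2) + b * (q / Real.sqrt 2) + c * ((r - p) / 2) := by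
      rw [hx2, hy2, mul_assoc b, hxy]
    rw [hmul]
    have hs2ne : Real.sqrt 2 ≠ 0 := by positivity
    field_simp
    ring

lemma choose_pq (A β E : ℝ) : ∃ p q : ℝ, p ^ 2 + q ^ 2 = 1 ∧
    Real.sqrt (A ^ 2 + β ^ 2 + E ^ 2) ≤
      |A * p + β * q + E * Real.sqrt (p ^ 2 + 2 * q ^ 2)| := by
  set N := Real.sqrt (A ^ 2 + β ^ 2) with hN
  have hN2 : N ^ 2 = A ^ 2 + β ^ 2 := Real.sq_sqrt (by positivity)
  have hNnn : 0 ≤ N := Real.sqrt_nonneg _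
  rcases eq_or_ne N 0 with hN0 | hN0
  · have hAβ : A ^ 2 + β ^ 2 = 0 := by rw [← hN2, hN0]; norm_num
    have hA0 : A = 0 := by nlinarith [sq_nonneg A, sq_nonneg β]
    have hβ0 : β = 0 := by nlinarith [sq_nonneg A, sq_nonneg β]
    refine ⟨1, 0, by norm_num, ?_⟩
    have h1 : ((1:ℝ)) ^ 2 + 2 * (0:ℝ) ^ 2 = 1 := by norm_num
    rw [h1, Real.sqrt_one, hA0, hβ0]
    have : (0:ℝ) * 1 + 0 * 0 + E * 1 = E := by ring
    rw [this]
    have : (0:ℝ) ^ 2 + 0 ^ 2 + E ^ 2 = E ^ 2 := by ring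
    rw [this, Real.sqrt_sq_eq_abs]
  · have hNpos : 0 < N := lt_of_le_of_ne hNnn (Ne.symm hN0)
    set ε : ℝ := if 0 ≤ E then 1 else -1 with hε
    have hε2 : ε ^ 2 = 1 := by rw [hε]; split <;> norm_num
    refine ⟨ε * A / N, ε * β / N, ?_, ?_⟩
    · have expand : (ε * A / N) ^ 2 + (ε * β / N) ^ 2 = ε ^ 2 * (A ^ 2 + β ^ 2) / N ^ 2 := by
        ring
      rw [expand, hε2, one_mul, ← hN2, div_self (pow_ne_zero 2 hN0)]
    · have hpq : (ε * A / N) ^ 2 + (ε * β / N) ^ 2 = 1 := by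
        have expand : (ε * A / N) ^ 2 + (ε * β / N) ^ 2 = ε ^ 2 * (A ^ 2 + β ^ 2) / N ^ 2 := by
          ring
        rw [expand, hε2, one_mul, ← hN2, div_self (pow_ne_zero 2 hN0)]
      set r := Real.sqrt ((ε * A / N) ^ 2 + 2 * (ε * β / N) ^ 2) with hr
      have hr1 : 1 ≤ r := by
        have h1 : (1:ℝ) = Real.sqrt ((ε * A / N) ^ 2 + (ε * β / N) ^ 2) := by
          rw [hpq, Real.sqrt_one]
        rw [hr, h1]
        exact Real.sqrt_le_sqrt (by nlinarith [sq_nonneg (ε * β / N)])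
      have hlin : A * (ε * A / N) + β * (ε * β / N) = ε * N := by
        have e1 : A * (ε * A / N) + β * (ε * β / N) = ε * (A ^ 2 + β ^ 2) / N := by ring
        rw [e1, ← hN2]
        field_simp
      rw [hlin, ← hN2]
      have hrr : (1:ℝ) ≤ r ^ 2 := by nlinarith
      have hE2 : (0:ℝ) ≤ E ^ 2 * (r ^ 2 - 1) := mul_nonneg (sq_nonneg E) (by linarith)
      have hsq : N ^ 2 + E ^ 2 ≤ (ε * N + E * r) ^ 2 := by
        rw [hε]
        split
        · have hE : (0:ℝ) ≤ E := ‹0 ≤ E›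
          have hNE : (0:ℝ) ≤ N * (E * r) :=
            mul_nonneg hNnn (mul_nonneg hE (le_trans zero_le_one hr1))
          nlinarith [hNE, hE2]
        · have hE : E < 0 := lt_of_not_ge ‹¬ 0 ≤ E›
          have hNE : (0:ℝ) ≤ N * (-E * r) :=
            mul_nonneg hNnn (mul_nonneg (le_of_lt (neg_pos.mpr hE)) (le_trans zero_le_one hr1))
          nlinarith [hNE, hE2]
      calc Real.sqrt (N ^ 2 + E ^ 2) ≤ Real.sqrt ((ε * N + E * r) ^ 2) :=
            Real.sqrt_le_sqrt hsq
        _ = |ε * N + E * r| := Real.sqrt_sq_eq_abs _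

lemma sup_one : supNormFour 1 0 (-1) = 1 := by
  unfold supNormFour
  apply le_antisymm
  · apply csSup_le
    · exact ⟨1, 1, 0, by norm_num⟩
    · rintro z ⟨x, y, hxy, rfl⟩
      rw [abs_le]
      constructor <;>
        nlinarith [sq_nonneg (x ^ 2 - y ^ 2), sq_nonneg (x * y), sq_nonneg x, sq_nonneg y]
  · exact le_csSup (bddS 1 0 (-1)) ⟨1, 0, by norm_num⟩

theorem stmt12 :
    (∀ a b c : ℝ, Real.sqrt (a ^ 2 + b ^ 2 + c ^ 2) ≤ Real.sqrt 2 * supNormFour a b c) ∧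
    (∃ a b c : ℝ, supNormFour a b c = 1 ∧
      Real.sqrt (a ^ 2 + b ^ 2 + c ^ 2) = Real.sqrt 2 * supNormFour a b c) := by
  have hsqrt2 : (Real.sqrt 2) ^ 2 = 2 := Real.sq_sqrt (by norm_num)
  have hsqrt2pos : 0 < Real.sqrt 2 := by positivity
  constructor
  · intro a b c
    obtain ⟨p, q, hpq, hineq⟩ := choose_pq ((a - c) / 2) (b / Real.sqrt 2) ((a + c) / 2)
    obtain ⟨x, y, hxy1, hval⟩ := point_lemma a b c p q hpq
    have hmem : |a * x ^ 2 + b * x * y + c * y ^ 2| ∈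
        {z : ℝ | ∃ x y : ℝ, x ^ 4 + y ^ 4 ≤ 1 ∧ z = |a * x ^ 2 + b * x * y + c * y ^ 2|} :=
      ⟨x, y, hxy1, rfl⟩
    have hle : |a * x ^ 2 + b * x * y + c * y ^ 2| ≤ supNormFour a b c :=
      le_csSup (bddS a b c) hmem
    have hkey : Real.sqrt (((a - c) / 2) ^ 2 + (b / Real.sqrt 2) ^ 2 + ((a + c) / 2) ^ 2)
        ≤ supNormFour a b c := by
      refine le_trans hineq ?_
      rw [← hval] at *
      exact hle
    have hhalf : ((a - c) / 2) ^ 2 + (b / Real.sqrt 2) ^ 2 + ((a + c) / 2) ^ 2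
        = (a ^ 2 + b ^ 2 + c ^ 2) / 2 := by
      have hb : (b / Real.sqrt 2) ^ 2 = b ^ 2 / 2 := by
        rw [div_pow, hsqrt2]
      rw [hb]
      ring
    have hrw : Real.sqrt (a ^ 2 + b ^ 2 + c ^ 2)
        = Real.sqrt 2 * Real.sqrt ((a ^ 2 + b ^ 2 + c ^ 2) / 2) := by
      rw [← Real.sqrt_mul (by norm_num : (0:ℝ) ≤ 2)]
      congr 1
      ring
    rw [hrw]
    refine mul_le_mul_of_nonneg_left ?_ (le_of_lt hsqrt2pos)
    rw [← hhalf]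
    exact hkey
  · refine ⟨1, 0, -1, sup_one, ?_⟩
    rw [sup_one]
    norm_num
end

section
/- For every q ≥ 2, the function f_q: [2,4] → ℝ given by f_q(t) = (2^{1−q}(4t − t²)^{q/2} + t^q)^{1/q} attains its maximum on [2,4] at t = 4, with maximum value 4. -/
open Real

lemma stmt15_key (q : ℝ) (hq : 2 ≤ q) {t : ℝ} (ht2 : 2 ≤ t) (ht4 : t ≤ 4) :
    (2:ℝ) ^ (1 - q) * (4 * t - t ^ 2) ^ (q / 2) + t ^ q ≤ (4:ℝ) ^ q := by
  have hq1 : (1:ℝ) ≤ q := by linarith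
  have hq0 : (0:ℝ) < q := by linarith
  have ht0 : (0:ℝ) < t := by linarith
  set s : ℝ := 4 - t with hsdef
  have hs0 : 0 ≤ s := by simp only [hsdef]; linarith
  have hs2 : s ≤ 2 := by simp only [hsdef]; linarith
  have hts : 4 * t - t ^ 2 ≤ 4 * s := by simp only [hsdef]; nlinarith
  have hC2' : t + s = 4 := by simp only [hsdef]; ring
  clear_value s
  have h2r : (2:ℝ) ^ (2:ℝ) = 4 := by
    rw [show (2:ℝ) = ((2:ℕ):ℝ) from by norm_num, Real.rpow_natCast]; norm_num
  -- Step A : (4t - t²)^(q/2) ≤ (4s)^(q/2)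
  have hA : (4 * t - t ^ 2) ^ (q / 2) ≤ (4 * s) ^ (q / 2) := by
    apply Real.rpow_le_rpow (by nlinarith) hts (by positivity)
  -- Step B : (4s)^(q/2) = 2^q * s^(q/2)
  have hB : (4 * s) ^ (q / 2) = 2 ^ q * s ^ (q / 2) := by
    rw [Real.mul_rpow (by norm_num) hs0]
    congr 1
    rw [← h2r, ← Real.rpow_mul (by norm_num)]
    ring_nf
  -- first term bound : 2^(1-q) * (4t-t²)^(q/2) ≤ 2 * s^(q/2)
  have hfirst : (2:ℝ) ^ (1 - q) * (4 * t - t ^ 2) ^ (q / 2) ≤ 2 * s ^ (q / 2) := by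
    calc (2:ℝ) ^ (1 - q) * (4 * t - t ^ 2) ^ (q / 2)
        ≤ (2:ℝ) ^ (1 - q) * (2 ^ q * s ^ (q / 2)) := by
          rw [← hB]; exact mul_le_mul_of_nonneg_left hA (by positivity)
      _ = ((2:ℝ) ^ (1 - q) * 2 ^ q) * s ^ (q / 2) := by ring
      _ = 2 * s ^ (q / 2) := by
          rw [← Real.rpow_add (by norm_num : (0:ℝ) < 2)]
          norm_num
  -- Step C1 : 2 * s^(q/2) ≤ 2^q * s
  have hC1 : 2 * s ^ (q / 2) ≤ 2 ^ q * s := by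
    rcases eq_or_lt_of_le hs0 with h | hspos
    · rw [← h, Real.zero_rpow (by positivity)]; simp
    · have h1 : s ^ (q / 2) = s * s ^ (q / 2 - 1) := by
        have := Real.rpow_add hspos 1 (q / 2 - 1)
        rw [Real.rpow_one, show (1:ℝ) + (q / 2 - 1) = q / 2 by ring] at this
        exact this
      have h2 : s ^ (q / 2 - 1) ≤ (2:ℝ) ^ (q / 2 - 1) :=
        Real.rpow_le_rpow hs0 hs2 (by linarith)
      have h3 : (2:ℝ) ^ (q / 2 - 1) ≤ (2:ℝ) ^ (q - 1) :=
        Real.rpow_le_rpow_of_exponent_le one_le_two (by linarith)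
      have h4 : (2:ℝ) * 2 ^ (q - 1) = 2 ^ q := by
        have := Real.rpow_add (by norm_num : (0:ℝ) < 2) 1 (q - 1)
        rw [Real.rpow_one, show (1:ℝ) + (q - 1) = q by ring] at this
        exact this.symm
      calc 2 * s ^ (q / 2) = 2 * (s * s ^ (q / 2 - 1)) := by rw [h1]
        _ ≤ 2 * (s * (2:ℝ) ^ (q - 1)) := by nlinarith [h2.trans h3]
        _ = (2 * 2 ^ (q - 1)) * s := by ring
        _ = 2 ^ q * s := by rw [h4]
  -- Step C2 : t^q + 2^q * s ≤ 4^q  (Bernoulli)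
  have hC2 : t ^ q + 2 ^ q * s ≤ (4:ℝ) ^ q := by
    have hz : (0:ℝ) ≤ s / t := div_nonneg hs0 ht0.le
    have hb := one_add_mul_self_le_rpow_one_add (by linarith : (-1:ℝ) ≤ s / t) hq1
    have h1st : (1 + s / t) = 4 / t := by
      field_simp
      linarith
    have htq : (0:ℝ) < t ^ q := Real.rpow_pos_of_pos ht0 q
    have hmul : t ^ q * (1 + q * (s / t)) ≤ t ^ q * (1 + s / t) ^ q :=
      mul_le_mul_of_nonneg_left hb htq.le
    rw [h1st, Real.div_rpow (by norm_num) ht0.le, mul_div_cancel₀ _ htq.ne'] at hmul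
    have htq1 : t ^ q / t = t ^ (q - 1) := by
      rw [Real.rpow_sub ht0, Real.rpow_one]
    have hLHS : t ^ q * (1 + q * (s / t)) = t ^ q + q * s * t ^ (q - 1) := by
      rw [← htq1]; field_simp
    rw [hLHS] at hmul
    have h2t : (2:ℝ) ^ (q - 1) ≤ t ^ (q - 1) :=
      Real.rpow_le_rpow (by norm_num) ht2 (by linarith)
    have h4 : (2:ℝ) * 2 ^ (q - 1) = 2 ^ q := by
      have := Real.rpow_add (by norm_num : (0:ℝ) < 2) 1 (q - 1)
      rw [Real.rpow_one, show (1:ℝ) + (q - 1) = q by ring] at this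
      exact this.symm
    have h2pos : (0:ℝ) < (2:ℝ) ^ (q - 1) := Real.rpow_pos_of_pos (by norm_num) _
    have : 2 ^ q * s ≤ q * s * t ^ (q - 1) := by
      rw [← h4]
      nlinarith [mul_nonneg (mul_nonneg (show (0:ℝ) ≤ q - 2 by linarith) hs0)
          (Real.rpow_pos_of_pos ht0 (q - 1)).le,
        mul_nonneg hs0 (sub_nonneg.2 h2t)]
    linarith
  linarith

theorem stmt15 (q : ℝ) (hq : 2 ≤ q) :
    IsGreatest
      ((fun t : ℝ => ((2 : ℝ) ^ (1 - q) * (4 * t - t ^ 2) ^ (q / 2) + t ^ q) ^ (1 / q)) ''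
        Set.Icc 2 4)
      (((2 : ℝ) ^ (1 - q) * (4 * 4 - 4 ^ 2 : ℝ) ^ (q / 2) + (4 : ℝ) ^ q) ^ (1 / q)) ∧
    ((2 : ℝ) ^ (1 - q) * (4 * 4 - 4 ^ 2 : ℝ) ^ (q / 2) + (4 : ℝ) ^ q) ^ (1 / q) = 4 := by
  have hq0 : (0:ℝ) < q := by linarith
  have heq : ((2 : ℝ) ^ (1 - q) * (4 * 4 - 4 ^ 2 : ℝ) ^ (q / 2) + (4 : ℝ) ^ q) ^ (1 / q) = 4 := by
    have h0 : (4 * 4 - 4 ^ 2 : ℝ) = 0 := by norm_num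
    rw [h0, Real.zero_rpow (by positivity), mul_zero, zero_add,
      ← Real.rpow_mul (by norm_num : (0:ℝ) ≤ 4), mul_one_div_cancel hq0.ne', Real.rpow_one]
  refine ⟨⟨⟨4, by norm_num, rfl⟩, ?_⟩, heq⟩
  rintro x ⟨t, ⟨ht2, ht4⟩, rfl⟩
  rw [heq]
  have hkey := stmt15_key q hq ht2 ht4
  have hnn : (0:ℝ) ≤ (2 : ℝ) ^ (1 - q) * (4 * t - t ^ 2) ^ (q / 2) + t ^ q := by
    have h1 : (0:ℝ) ≤ 4 * t - t ^ 2 := by nlinarith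
    have h2 : (0:ℝ) ≤ t := by linarith
    positivity
  calc ((2 : ℝ) ^ (1 - q) * (4 * t - t ^ 2) ^ (q / 2) + t ^ q) ^ (1 / q)
      ≤ ((4:ℝ) ^ q) ^ (1 / q) := Real.rpow_le_rpow hnn hkey (by positivity)
    _ = 4 := by
        rw [← Real.rpow_mul (by norm_num : (0:ℝ) ≤ 4), mul_one_div_cancel hq0.ne', Real.rpow_one]
end

section
/- For every q ≥ 2, the function g_q: [1/2,1] → ℝ given by g_q(t) = (2t^q + 2^q t^{q/2}(1−t)^{q/2})^{1/q} attains its maximum on [1/2,1] at t = 1, with maximum value 2^{1/q}. -/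
lemma stmt16_key (q : ℝ) (hq : 2 ≤ q) {t : ℝ} (ht : t ∈ Set.Icc (1/2 : ℝ) 1) :
    2 * t ^ q + (2 : ℝ) ^ q * t ^ (q / 2) * (1 - t) ^ (q / 2) ≤ 2 := by
  obtain ⟨ht0', ht1⟩ := ht
  have ht0 : 0 < t := by linarith
  have h1t : 0 ≤ 1 - t := by linarith
  have hq0 : 0 < q := by linarith
  have hA : t ^ q ≤ t ^ (2 : ℝ) := Real.rpow_le_rpow_of_exponent_ge ht0 ht1 hq
  have hB : (2 : ℝ) ^ q * t ^ (q / 2) * (1 - t) ^ (q / 2) = (4 * t * (1 - t)) ^ (q / 2) := by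
    rw [Real.mul_rpow (by positivity) h1t, Real.mul_rpow (by norm_num) ht0.le]
    have h4 : (4 : ℝ) ^ (q / 2) = (2 : ℝ) ^ q := by
      rw [show (4 : ℝ) = (2 : ℝ) ^ (2 : ℝ) by
        rw [show (2:ℝ) = ((2:ℕ):ℝ) by norm_num, Real.rpow_natCast]; norm_num,
        ← Real.rpow_mul (by norm_num)]
      ring_nf
    rw [h4]
  have hx0 : (0 : ℝ) ≤ 4 * t * (1 - t) := by positivity
  have hx1 : 4 * t * (1 - t) ≤ 1 := by nlinarith [sq_nonneg (2 * t - 1)]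
  have hC : (4 * t * (1 - t)) ^ (q / 2) ≤ 4 * t * (1 - t) := by
    rcases eq_or_lt_of_le hx0 with h | h
    · rw [← h, Real.zero_rpow (by positivity)]
    · calc (4 * t * (1 - t)) ^ (q / 2) ≤ (4 * t * (1 - t)) ^ (1 : ℝ) :=
            Real.rpow_le_rpow_of_exponent_ge h hx1 (by linarith)
        _ = 4 * t * (1 - t) := Real.rpow_one _
  have ht2 : t ^ (2 : ℝ) = t * t := by
    rw [show (2:ℝ) = ((2:ℕ):ℝ) by norm_num, Real.rpow_natCast]; ring
  rw [hB]
  have hA' : t ^ q ≤ t * t := by rw [← ht2]; exact hA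
  revert hA' hC
  generalize t ^ q = a
  generalize (4 * t * (1 - t)) ^ (q / 2) = b
  intro hA' hC
  nlinarith [sq_nonneg (1 - t)]

theorem stmt16 (q : ℝ) (hq : 2 ≤ q) :
    IsGreatest
      ((fun t : ℝ => (2 * t ^ q + (2 : ℝ) ^ q * t ^ (q / 2) * (1 - t) ^ (q / 2)) ^ (1 / q)) ''
        Set.Icc (1 / 2) 1)
      ((2 * (1 : ℝ) ^ q + (2 : ℝ) ^ q * (1 : ℝ) ^ (q / 2) * (1 - 1 : ℝ) ^ (q / 2)) ^ (1 / q)) ∧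
    (2 * (1 : ℝ) ^ q + (2 : ℝ) ^ q * (1 : ℝ) ^ (q / 2) * (1 - 1 : ℝ) ^ (q / 2)) ^ (1 / q) =
      (2 : ℝ) ^ (1 / q) := by
  have hq0 : 0 < q := by linarith
  have hval : (2 * (1 : ℝ) ^ q + (2 : ℝ) ^ q * (1 : ℝ) ^ (q / 2) * (1 - 1 : ℝ) ^ (q / 2)) ^ (1 / q)
      = (2 : ℝ) ^ (1 / q) := by
    rw [Real.one_rpow, Real.one_rpow, show (1 - 1 : ℝ) = 0 by ring,
      Real.zero_rpow (by positivity)]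
    norm_num
  refine ⟨⟨⟨1, by norm_num, rfl⟩, ?_⟩, hval⟩
  rintro y ⟨t, ht, rfl⟩
  rw [hval]
  have h1 := stmt16_key q hq ht
  have hnn : (0 : ℝ) ≤ 2 * t ^ q + (2 : ℝ) ^ q * t ^ (q / 2) * (1 - t) ^ (q / 2) := by
    obtain ⟨ht0, ht1⟩ := ht
    have : (0:ℝ) ≤ t := by linarith
    have : (0:ℝ) ≤ 1 - t := by linarith
    positivity
  exact Real.rpow_le_rpow hnn h1 (by positivity)
end

section
/- For t ∈ [2,4], the 2-homogeneous polynomial P_t(x,y) = (√(4t − t²)/2)(x² − y²) + t·xy satisfies sup{|P_t(x,y)| : |x| + |y| ≤ 1} = 1. -/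
lemma aux17 (t q a b : ℝ) (ht2 : 2 ≤ t) (hq2 : q ^ 2 = 4 * t - t ^ 2)
    (ha : 0 ≤ a) (hb : 0 ≤ b) (hab : a + b ≤ 1) :
    q / 2 * (a ^ 2 - b ^ 2) + t * (a * b) ≤ 1 := by
  have ht0 : (0:ℝ) < t := by linarith
  have key : 4 * t * (1 - (q / 2 * (a ^ 2 - b ^ 2) + t * (a * b)))
      = (t * (a - b) - q * (a + b)) ^ 2 + 4 * t * (1 - (a + b) ^ 2) := by
    linear_combination (-(a + b) ^ 2) * hq2
  have hr : (a + b) ^ 2 ≤ 1 := by nlinarith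
  have pos : 0 ≤ 4 * t * (1 - (q / 2 * (a ^ 2 - b ^ 2) + t * (a * b))) := by
    rw [key]
    have := sq_nonneg (t * (a - b) - q * (a + b))
    nlinarith
  nlinarith [pos, ht0]

theorem stmt17 (t : ℝ) (ht : t ∈ Set.Icc (2 : ℝ) 4) :
    supNormOne (Real.sqrt (4 * t - t ^ 2) / 2) t (-(Real.sqrt (4 * t - t ^ 2) / 2)) = 1 := by
  obtain ⟨ht2, ht4⟩ := ht
  have ht0 : (0:ℝ) < t := by linarith
  set q := Real.sqrt (4 * t - t ^ 2) with hqdef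
  have hq0 : 0 ≤ q := Real.sqrt_nonneg _
  have hq2 : q ^ 2 = 4 * t - t ^ 2 := by
    rw [hqdef, Real.sq_sqrt]; nlinarith
  have hqt : q ≤ t := by nlinarith
  set u := q / t with hudef
  have hu0 : 0 ≤ u := div_nonneg hq0 ht0.le
  have hu1 : u ≤ 1 := by rw [hudef, div_le_one ht0]; exact hqt
  -- pointwise bound
  have bound : ∀ x y : ℝ, |x| + |y| ≤ 1 →
      |q / 2 * x ^ 2 + t * x * y + -(q / 2) * y ^ 2| ≤ 1 := by
    intro x y hxy
    have h0x : 0 ≤ |x| := abs_nonneg x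
    have h0y : 0 ≤ |y| := abs_nonneg y
    have hax : x ^ 2 = |x| ^ 2 := (sq_abs x).symm
    have hay : y ^ 2 = |y| ^ 2 := (sq_abs y).symm
    have tri : |q / 2 * x ^ 2 + t * x * y + -(q / 2) * y ^ 2|
        ≤ q / 2 * |x ^ 2 - y ^ 2| + t * (|x| * |y|) := by
      have h1 : q / 2 * x ^ 2 + t * x * y + -(q / 2) * y ^ 2
          = q / 2 * (x ^ 2 - y ^ 2) + t * (x * y) := by ring
      rw [h1]
      calc |q / 2 * (x ^ 2 - y ^ 2) + t * (x * y)|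
          ≤ |q / 2 * (x ^ 2 - y ^ 2)| + |t * (x * y)| := abs_add_le _ _
        _ = q / 2 * |x ^ 2 - y ^ 2| + t * (|x| * |y|) := by
            rw [abs_mul, abs_mul, abs_mul, abs_of_nonneg (by linarith : (0:ℝ) ≤ q / 2),
              abs_of_nonneg ht0.le]
    refine le_trans tri ?_
    rcases le_total (|y|) (|x|) with hc | hc
    · have habs : |x ^ 2 - y ^ 2| = |x| ^ 2 - |y| ^ 2 := by
        rw [hax, hay, abs_of_nonneg (by nlinarith)]
      rw [habs]
      exact aux17 t q (|x|) (|y|) ht2 hq2 h0x h0y hxy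
    · have habs : |x ^ 2 - y ^ 2| = |y| ^ 2 - |x| ^ 2 := by
        rw [hax, hay, abs_of_nonpos (by nlinarith), neg_sub]
      rw [habs]
      have := aux17 t q (|y|) (|x|) ht2 hq2 h0y h0x (by linarith)
      linarith [this, mul_comm (|y|) (|x|)]
  -- membership of 1
  have mem1 : (1:ℝ) ∈ {z : ℝ | ∃ x y : ℝ, |x| + |y| ≤ 1 ∧
      z = |q / 2 * x ^ 2 + t * x * y + -(q / 2) * y ^ 2|} := by
    refine ⟨(1 + u) / 2, (1 - u) / 2, ?_, ?_⟩
    · rw [abs_of_nonneg (by linarith), abs_of_nonneg (by linarith)]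
      linarith
    · have h1 : t * u = q := by rw [hudef]; field_simp
      have hu2 : t * u ^ 2 = 4 - t := by
        refine mul_left_cancel₀ ht0.ne' ?_
        linear_combination (t * u + q) * h1 + hq2
      have hval : q / 2 * ((1 + u) / 2) ^ 2 + t * ((1 + u) / 2) * ((1 - u) / 2)
          + -(q / 2) * ((1 - u) / 2) ^ 2 = 1 := by
        linear_combination (-(u / 2)) * h1 + (1 / 4) * hu2
      rw [hval]; norm_num
  have hbdd : ∀ z ∈ {z : ℝ | ∃ x y : ℝ, |x| + |y| ≤ 1 ∧
      z = |q / 2 * x ^ 2 + t * x * y + -(q / 2) * y ^ 2|}, z ≤ 1 := by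
    rintro z ⟨x, y, hxy, rfl⟩
    exact bound x y hxy
  unfold supNormOne
  apply le_antisymm
  · exact csSup_le ⟨1, mem1⟩ hbdd
  · exact le_csSup ⟨1, hbdd⟩ mem1
end

section
/- For t ∈ [1/2, 1], the 2-homogeneous polynomial Q_t(x,y) = t·x² − t·y² + 2√(t(1−t))·xy satisfies sup{|Q_t(x,y)| : |x| ≤ 1, |y| ≤ 1} = 1. -/
theorem stmt18 (t : ℝ) (ht : t ∈ Set.Icc (1 / 2 : ℝ) 1) :
    supNormInf t (2 * Real.sqrt (t * (1 - t))) (-t) = 1 := by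
  obtain ⟨ht1, ht2⟩ := ht
  have htpos : (0:ℝ) < t := by linarith
  have hnn : (0:ℝ) ≤ t * (1 - t) := by nlinarith
  set s := Real.sqrt (t * (1 - t)) with hs
  have hs0 : 0 ≤ s := Real.sqrt_nonneg _
  have hs2 : s ^ 2 = t * (1 - t) := Real.sq_sqrt hnn
  have hab : Real.sqrt (1 - t) * Real.sqrt t = s := by
    rw [hs, mul_comm t, Real.sqrt_mul (by linarith)]
  have ha2 : Real.sqrt t ^ 2 = t := Real.sq_sqrt (le_of_lt htpos)
  have hb2 : Real.sqrt (1 - t) ^ 2 = 1 - t := Real.sq_sqrt (by linarith)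
  have hst : s ≤ t := by
    have : s ≤ Real.sqrt (t * t) := Real.sqrt_le_sqrt (by nlinarith)
    rwa [Real.sqrt_mul_self (le_of_lt htpos)] at this
  -- upper bound
  have hub : ∀ z ∈ {z : ℝ | ∃ x y : ℝ, |x| ≤ 1 ∧ |y| ≤ 1 ∧
      z = |t * x ^ 2 + 2 * s * x * y + (-t) * y ^ 2|}, z ≤ 1 := by
    rintro z ⟨x, y, hx, hy, rfl⟩
    have hx2 : x ^ 2 ≤ 1 := by rw [← sq_abs]; nlinarith [abs_nonneg x]
    have hy2 : y ^ 2 ≤ 1 := by rw [← sq_abs]; nlinarith [abs_nonneg y]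
    rw [abs_le]
    constructor
    · have e1 : (Real.sqrt (1 - t) * y + Real.sqrt t * x) ^ 2 =
          (1 - t) * y ^ 2 + 2 * s * x * y + t * x ^ 2 := by
        linear_combination y ^ 2 * hb2 + x ^ 2 * ha2 + 2 * x * y * hab
      nlinarith [sq_nonneg (Real.sqrt (1 - t) * y + Real.sqrt t * x), e1]
    · have e2 : (Real.sqrt (1 - t) * x - Real.sqrt t * y) ^ 2 =
          (1 - t) * x ^ 2 - 2 * s * x * y + t * y ^ 2 := by
        linear_combination x ^ 2 * hb2 + y ^ 2 * ha2 - 2 * x * y * hab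
      nlinarith [sq_nonneg (Real.sqrt (1 - t) * x - Real.sqrt t * y), e2]
  -- membership of 1
  have hmem : (1:ℝ) ∈ {z : ℝ | ∃ x y : ℝ, |x| ≤ 1 ∧ |y| ≤ 1 ∧
      z = |t * x ^ 2 + 2 * s * x * y + (-t) * y ^ 2|} := by
    refine ⟨1, s / t, by norm_num, ?_, ?_⟩
    · rw [abs_div, abs_of_nonneg hs0, abs_of_pos htpos, div_le_one htpos]
      exact hst
    · have : t * 1 ^ 2 + 2 * s * 1 * (s / t) + (-t) * (s / t) ^ 2 = 1 := by
        field_simp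
        nlinarith
      rw [this]; norm_num
  unfold supNormInf
  apply le_antisymm
  · exact csSup_le ⟨1, hmem⟩ hub
  · exact le_csSup ⟨1, hub⟩ hmem
end

section
/- Let p > 2 and let α, β ≥ 0 with α^p + β^p = 1. Then the 2-homogeneous polynomial P(x,y) = ((α^p − β^p)/(α² + β²))(x² − y²) + 2αβ·((α^{p−2} + β^{p−2})/(α² + β²))·xy satisfies sup{|P(x,y)| : |x|^p + |y|^p ≤ 1} = 1, with the supremum attained at (x,y) = (α, β). -/
open Real

lemma ny1 (p u : ℝ) (hp : 2 < p) (hu : 0 ≤ u) :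
    u ^ 2 ≤ (2/p) * u ^ p + (p-2)/p := by
  have hp0 : (0:ℝ) < p := by linarith
  have key := Real.geom_mean_le_arith_mean2_weighted (w₁ := 2/p) (w₂ := (p-2)/p)
    (p₁ := u ^ p) (p₂ := 1) (by positivity) (by apply div_nonneg <;> linarith)
    (Real.rpow_nonneg hu p) zero_le_one (by field_simp; ring)
  have e1 : (u ^ p) ^ (2/p) = u ^ 2 := by
    rw [← Real.rpow_mul hu]
    have : p * (2/p) = 2 := by field_simp
    rw [this]
    exact Real.rpow_two u ▸ rfl
  rw [e1, Real.one_rpow, mul_one, mul_one] at key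
  linarith

lemma ny2 (p u v : ℝ) (hp : 2 < p) (hu : 0 ≤ u) (hv : 0 ≤ v) :
    u * v ≤ (1/p) * u ^ p + (1/p) * v ^ p + (p-2)/p := by
  have hp0 : (0:ℝ) < p := by linarith
  have key := Real.geom_mean_le_arith_mean3_weighted (w₁ := 1/p) (w₂ := 1/p) (w₃ := (p-2)/p)
    (p₁ := u ^ p) (p₂ := v ^ p) (p₃ := 1) (by positivity) (by positivity)
    (by apply div_nonneg <;> linarith)
    (Real.rpow_nonneg hu p) (Real.rpow_nonneg hv p) zero_le_one (by field_simp; ring)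
  have e1 : (u ^ p) ^ (1/p) = u := by
    rw [← Real.rpow_mul hu, mul_one_div_cancel hp0.ne', Real.rpow_one]
  have e2 : (v ^ p) ^ (1/p) = v := by
    rw [← Real.rpow_mul hv, mul_one_div_cancel hp0.ne', Real.rpow_one]
  rw [e1, e2, Real.one_rpow, mul_one, mul_one] at key
  linarith

lemma rpow_split (p α : ℝ) (hp : 2 < p) (hα : 0 ≤ α) : α ^ p = α ^ (p-2) * α ^ 2 := by
  rcases eq_or_lt_of_le hα with h0 | h0
  · rw [← h0]
    rw [Real.zero_rpow (by linarith), Real.zero_rpow (by linarith)]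
    ring
  · rw [← Real.rpow_two, ← Real.rpow_add h0]
    norm_num

-- scaled Young 1 : x^2 ≤ (2/p) * (x^p/c^p) * c^2 + ((p-2)/p) * c^2
lemma sy1 (p x c : ℝ) (hp : 2 < p) (hx : 0 ≤ x) (hc : 0 < c) :
    x ^ 2 ≤ (2/p) * (x ^ p / c ^ p) * c ^ 2 + ((p-2)/p) * c ^ 2 := by
  have h := ny1 p (x/c) hp (by positivity)
  have hcp : (0:ℝ) < c ^ p := Real.rpow_pos_of_pos hc p
  have e : (x/c) ^ p = x ^ p / c ^ p := Real.div_rpow hx hc.le p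
  rw [e] at h
  have := mul_le_mul_of_nonneg_right h (le_of_lt (by positivity : (0:ℝ) < c ^ 2))
  calc x ^ 2 = (x/c)^2 * c^2 := by field_simp
    _ ≤ ((2/p) * (x ^ p / c ^ p) + (p-2)/p) * c ^ 2 := this
    _ = (2/p) * (x ^ p / c ^ p) * c ^ 2 + ((p-2)/p) * c ^ 2 := by ring

lemma sy2 (p x y c d : ℝ) (hp : 2 < p) (hx : 0 ≤ x) (hy : 0 ≤ y) (hc : 0 < c) (hd : 0 < d) :
    x * y ≤ (1/p) * (x ^ p / c ^ p) * (c*d) + (1/p) * (y ^ p / d ^ p) * (c*d)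
      + ((p-2)/p) * (c*d) := by
  have h := ny2 p (x/c) (y/d) hp (by positivity) (by positivity)
  rw [Real.div_rpow hx hc.le p, Real.div_rpow hy hd.le p] at h
  have := mul_le_mul_of_nonneg_right h (le_of_lt (by positivity : (0:ℝ) < c * d))
  calc x * y = (x/c) * (y/d) * (c*d) := by field_simp
    _ ≤ ((1/p) * (x ^ p / c ^ p) + (1/p) * (y ^ p / d ^ p) + (p-2)/p) * (c*d) := this
    _ = _ := by ring

lemma key (p : ℝ) (hp : 2 < p) (α β : ℝ) (hβ : 0 ≤ β) (hba : β ≤ α)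
    (h : α ^ p + β ^ p = 1) (x y : ℝ) (hx : 0 ≤ x) (hy : 0 ≤ y)
    (hxy : x ^ p + y ^ p ≤ 1) :
    (α ^ p - β ^ p) / (α ^ 2 + β ^ 2) * x ^ 2
      + 2 * α * β * ((α ^ (p-2) + β ^ (p-2)) / (α ^ 2 + β ^ 2)) * x * y
      + -((α ^ p - β ^ p) / (α ^ 2 + β ^ 2)) * y ^ 2 ≤ 1 := by
  have hp0 : (0:ℝ) < p := by linarith
  have hα : 0 < α := by
    rcases eq_or_lt_of_le (hβ.trans hba) with h0 | h0
    · exfalso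
      have hβ0 : β = 0 := le_antisymm (h0 ▸ hba) hβ
      rw [← h0, hβ0, Real.zero_rpow hp0.ne'] at h
      norm_num at h
    · exact h0
  have hx1 : x ≤ 1 := by
    by_contra hcon
    push_neg at hcon
    have : 1 < x ^ p := (Real.one_lt_rpow_iff_of_pos (by linarith)).mpr (Or.inl ⟨hcon, hp0⟩)
    have : 0 ≤ y ^ p := Real.rpow_nonneg hy p
    linarith
  rcases eq_or_lt_of_le hβ with hβ0 | hβpos
  · -- β = 0, α = 1
    have hβ0' : β = 0 := hβ0.symm
    subst hβ0'
    rw [Real.zero_rpow hp0.ne', add_zero] at h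
    have hα1 : α = 1 := by
      rcases lt_trichotomy α 1 with hl | he | hg
      · exfalso; have := Real.rpow_lt_one hα.le hl hp0; linarith
      · exact he
      · exfalso; have := (Real.one_lt_rpow_iff_of_pos hα).mpr (Or.inl ⟨hg, hp0⟩); linarith
    subst hα1
    rw [Real.zero_rpow (ne_of_gt (by linarith : (0:ℝ) < p - 2)), Real.zero_rpow hp0.ne',
      Real.one_rpow]
    norm_num
    nlinarith [sq_nonneg y]
  · -- main case
    have hS : (0:ℝ) < α ^ 2 + β ^ 2 := by positivity
    have hA2 : α ^ p = α ^ (p-2) * α ^ 2 := rpow_split p α hp hα.le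
    have hB2 : β ^ p = β ^ (p-2) * β ^ 2 := rpow_split p β hp hβ
    have hApos : 0 < α ^ p := Real.rpow_pos_of_pos hα p
    have hBpos : 0 < β ^ p := Real.rpow_pos_of_pos hβpos p
    have hB2pos : 0 < β ^ (p-2) := Real.rpow_pos_of_pos hβpos (p-2)
    have hA2pos : 0 < α ^ (p-2) := Real.rpow_pos_of_pos hα (p-2)
    have hab : β ^ p ≤ α ^ p := Real.rpow_le_rpow hβ hba hp0.le
    have hY1 := sy1 p x α hp hx hα
    have hY2 := sy2 p x y α β hp hx hy hα hβpos
    have hG1 : (α^p - β^p) * x^2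
        ≤ (α^p - β^p) * ((2/p) * (x^p/α^p) * α^2 + ((p-2)/p) * α^2) :=
      mul_le_mul_of_nonneg_left hY1 (by linarith)
    have hG2 : (2*α*β*β^(p-2)) * (x*y)
        ≤ (2*α*β*β^(p-2)) * ((1/p) * (x^p/α^p) * (α*β) + (1/p) * (y^p/β^p) * (α*β)
            + ((p-2)/p) * (α*β)) :=
      mul_le_mul_of_nonneg_left hY2 (by positivity)
    have c1 : (α^p - β^p) * ((2/p) * (x^p/α^p) * α^2)
        + (2*α*β*β^(p-2)) * ((1/p) * (x^p/α^p) * (α*β)) = (2/p) * α^2 * x^p := by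
      field_simp
      linear_combination (-x^p) * hB2
    have c2 : (2*α*β*β^(p-2)) * ((1/p) * (y^p/β^p) * (α*β)) = (2/p) * α^2 * y^p := by
      field_simp
      linear_combination (-y^p) * hB2
    have c3 : (α^p - β^p) * (((p-2)/p) * α^2)
        + (2*α*β*β^(p-2)) * (((p-2)/p) * (α*β)) = ((p-2)/p) * α^2 := by
      field_simp
      linear_combination (p-2) * h + (-2 * (p-2)) * hB2
    have hG : (α^p - β^p) * x^2 + (2*α*β*β^(p-2)) * (x*y) ≤ α^2 := by
      have hxys : (2/p) * α^2 * x^p + (2/p) * α^2 * y^p ≤ (2/p) * α^2 := by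
        have h2 : (0:ℝ) ≤ (2/p) * α^2 := by positivity
        nlinarith
      have c4 : (2/p) * α^2 + ((p-2)/p) * α^2 = α^2 := by field_simp; ring
      linarith [hG1, hG2, c1, c2, c3]
    -- identity: α² * f = (A-B)x² + 2αβB2 xy - ((A-B)/S)(αy-βx)²
    have hid : α^2 * ((α ^ p - β ^ p) / (α ^ 2 + β ^ 2) * x ^ 2
        + 2 * α * β * ((α ^ (p-2) + β ^ (p-2)) / (α ^ 2 + β ^ 2)) * x * y
        + -((α ^ p - β ^ p) / (α ^ 2 + β ^ 2)) * y ^ 2)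
        = (α^p - β^p) * x^2 + (2*α*β*β^(p-2)) * (x*y)
          - ((α^p - β^p) / (α ^ 2 + β ^ 2)) * (α*y - β*x)^2 := by
      rw [hA2, hB2]
      field_simp
      ring
    have hdrop : 0 ≤ ((α^p - β^p) / (α ^ 2 + β ^ 2)) * (α*y - β*x)^2 :=
      mul_nonneg (div_nonneg (by linarith) hS.le) (sq_nonneg _)
    have hfin : α^2 * ((α ^ p - β ^ p) / (α ^ 2 + β ^ 2) * x ^ 2
        + 2 * α * β * ((α ^ (p-2) + β ^ (p-2)) / (α ^ 2 + β ^ 2)) * x * y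
        + -((α ^ p - β ^ p) / (α ^ 2 + β ^ 2)) * y ^ 2) ≤ α^2 * 1 := by
      rw [hid, mul_one]
      linarith
    exact le_of_mul_le_mul_left hfin (by positivity)

lemma upper (p : ℝ) (hp : 2 < p) (α β : ℝ) (hα : 0 ≤ α) (hβ : 0 ≤ β)
    (h : α ^ p + β ^ p = 1) (x y : ℝ) (hx : 0 ≤ x) (hy : 0 ≤ y)
    (hxy : x ^ p + y ^ p ≤ 1) :
    (α ^ p - β ^ p) / (α ^ 2 + β ^ 2) * x ^ 2
      + 2 * α * β * ((α ^ (p-2) + β ^ (p-2)) / (α ^ 2 + β ^ 2)) * x * y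
      + -((α ^ p - β ^ p) / (α ^ 2 + β ^ 2)) * y ^ 2 ≤ 1 := by
  rcases le_total β α with hba | hab
  · exact key p hp α β hβ hba h x y hx hy hxy
  · have h2 := key p hp β α hα hab (by linarith) y x hy hx (by linarith)
    have e : (β ^ p - α ^ p) / (β ^ 2 + α ^ 2) * y ^ 2
        + 2 * β * α * ((β ^ (p-2) + α ^ (p-2)) / (β ^ 2 + α ^ 2)) * y * x
        + -((β ^ p - α ^ p) / (β ^ 2 + α ^ 2)) * x ^ 2
        = (α ^ p - β ^ p) / (α ^ 2 + β ^ 2) * x ^ 2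
          + 2 * α * β * ((α ^ (p-2) + β ^ (p-2)) / (α ^ 2 + β ^ 2)) * x * y
          + -((α ^ p - β ^ p) / (α ^ 2 + β ^ 2)) * y ^ 2 := by
      rw [add_comm (β ^ 2) (α ^ 2), add_comm (β ^ (p-2)) (α ^ (p-2))]
      ring
    rw [e] at h2
    exact h2

lemma absP (a b x y : ℝ) (hb : 0 ≤ b)
    (h1 : a * |x| ^ 2 + b * |x| * |y| + -a * |y| ^ 2 ≤ 1)
    (h2 : a * |y| ^ 2 + b * |y| * |x| + -a * |x| ^ 2 ≤ 1) :
    |a * x ^ 2 + b * x * y + -a * y ^ 2| ≤ 1 := by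
  have ex : a * |x| ^ 2 = a * x ^ 2 := by rw [sq_abs]
  have ey : a * |y| ^ 2 = a * y ^ 2 := by rw [sq_abs]
  have hxy1 : b * (x * y) ≤ b * (|x| * |y|) := by
    rw [← abs_mul]; exact mul_le_mul_of_nonneg_left (le_abs_self _) hb
  have hxy2 : b * (-(|x| * |y|)) ≤ b * (x * y) := by
    rw [← abs_mul]; exact mul_le_mul_of_nonneg_left (neg_abs_le _) hb
  rw [abs_le]
  constructor
  · nlinarith [h2, ex, ey, hxy2]
  · nlinarith [h1, ex, ey, hxy1]

lemma value (p : ℝ) (hp : 2 < p) (α β : ℝ) (hα : 0 ≤ α) (hβ : 0 ≤ β)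
    (h : α ^ p + β ^ p = 1) :
    (α ^ p - β ^ p) / (α ^ 2 + β ^ 2) * α ^ 2
      + 2 * α * β * ((α ^ (p-2) + β ^ (p-2)) / (α ^ 2 + β ^ 2)) * α * β
      + -((α ^ p - β ^ p) / (α ^ 2 + β ^ 2)) * β ^ 2 = 1 := by
  have hp0 : (0:ℝ) < p := by linarith
  have hne : α ≠ 0 ∨ β ≠ 0 := by
    by_contra hc
    push_neg at hc
    obtain ⟨h1, h2⟩ := hc
    rw [h1, h2, Real.zero_rpow hp0.ne'] at h
    norm_num at h
  have hS : (0:ℝ) < α ^ 2 + β ^ 2 := by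
    rcases hne with h' | h' <;> positivity
  have hA2 : α ^ p = α ^ (p-2) * α ^ 2 := rpow_split p α hp hα
  have hB2 : β ^ p = β ^ (p-2) * β ^ 2 := rpow_split p β hp hβ
  rw [hA2, hB2] at h ⊢
  field_simp
  linear_combination (α ^ 2 + β ^ 2) * h

theorem stmt19 (p : ℝ) (hp : 2 < p) (α β : ℝ) (hα : 0 ≤ α) (hβ : 0 ≤ β)
    (h : α ^ p + β ^ p = 1) :
    let a : ℝ := (α ^ p - β ^ p) / (α ^ 2 + β ^ 2)
    let b : ℝ := 2 * α * β * ((α ^ (p - 2) + β ^ (p - 2)) / (α ^ 2 + β ^ 2))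
    IsGreatest
      {z : ℝ | ∃ x y : ℝ, |x| ^ p + |y| ^ p ≤ 1 ∧
        z = |a * x ^ 2 + b * x * y + (-a) * y ^ 2|} 1 ∧
    |a * α ^ 2 + b * α * β + (-a) * β ^ 2| = 1 := by
  intro a b
  have hp0 : (0:ℝ) < p := by linarith
  have hne : α ≠ 0 ∨ β ≠ 0 := by
    by_contra hc
    push_neg at hc
    obtain ⟨h1, h2⟩ := hc
    rw [h1, h2, Real.zero_rpow hp0.ne'] at h
    norm_num at h
  have hS : (0:ℝ) < α ^ 2 + β ^ 2 := by
    rcases hne with h' | h' <;> positivity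
  have hb : 0 ≤ b := by
    have h1 : (0:ℝ) ≤ α ^ (p-2) := Real.rpow_nonneg hα _
    have h2 : (0:ℝ) ≤ β ^ (p-2) := Real.rpow_nonneg hβ _
    have : (0:ℝ) ≤ (α ^ (p - 2) + β ^ (p - 2)) / (α ^ 2 + β ^ 2) :=
      div_nonneg (by linarith) hS.le
    show (0:ℝ) ≤ 2 * α * β * ((α ^ (p - 2) + β ^ (p - 2)) / (α ^ 2 + β ^ 2))
    positivity
  have hval : a * α ^ 2 + b * α * β + (-a) * β ^ 2 = 1 := by
    have := value p hp α β hα hβ h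
    show (α ^ p - β ^ p) / (α ^ 2 + β ^ 2) * α ^ 2
      + 2 * α * β * ((α ^ (p - 2) + β ^ (p - 2)) / (α ^ 2 + β ^ 2)) * α * β
      + -((α ^ p - β ^ p) / (α ^ 2 + β ^ 2)) * β ^ 2 = 1
    linarith [this]
  have hub : ∀ x y : ℝ, |x| ^ p + |y| ^ p ≤ 1 →
      |a * x ^ 2 + b * x * y + (-a) * y ^ 2| ≤ 1 := by
    intro x y hxy
    have h1 := upper p hp α β hα hβ h |x| |y| (abs_nonneg x) (abs_nonneg y) hxy
    have h2 := upper p hp α β hα hβ h |y| |x| (abs_nonneg y) (abs_nonneg x)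
      (by linarith)
    exact absP a b x y hb h1 h2
  refine ⟨⟨⟨α, β, ?_, ?_⟩, ?_⟩, by rw [hval]; norm_num⟩
  · rw [abs_of_nonneg hα, abs_of_nonneg hβ]; exact le_of_eq h
  · rw [hval]; norm_num
  · rintro z ⟨x, y, hxy, rfl⟩
    exact hub x y hxy
end
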